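/- arXiv:2411.06941 — 2 statements merged into one kernel-verified Lean document; each statement's English description precedes it below -/
import Mathlib

section
/- Let G be a finite connected simple graph on n ≥ 1 vertices with at least one edge and let d ≥ 0 be an integer, and suppose χ^d(G) = (λ₁ − λₙ)/(d − λₙ) = m. Then in every d-improper colouring of G with m colours, each colour class induces a d-regular subgraph; moreover there exists an eigenvector u of the adjacency matrix A for the eigenvalue λ₁ with all entries positive such that the partition into colour classes is weight-regular with respect to the weights u_v. -/
open SimpleGraph Finset Matrix

namespace ImproperPaper

variable {V W : Type*}

/-- The strong product of two simple graphs. -/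
def strongProd (G : SimpleGraph V) (H : SimpleGraph W) : SimpleGraph (V × W) where
  Adj p q := (p.1 = q.1 ∧ H.Adj p.2 q.2) ∨ (G.Adj p.1 q.1 ∧ p.2 = q.2) ∨
    (G.Adj p.1 q.1 ∧ H.Adj p.2 q.2)
  symm := by
    refine ⟨?_⟩
    rintro ⟨a, b⟩ ⟨x, y⟩ (⟨h1, h2⟩ | ⟨h1, h2⟩ | ⟨h1, h2⟩)
    · exact Or.inl ⟨h1.symm, h2.symm⟩
    · exact Or.inr (Or.inl ⟨h1.symm, h2.symm⟩)
    · exact Or.inr (Or.inr ⟨h1.symm, h2.symm⟩)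
  loopless := by
    refine ⟨?_⟩
    rintro ⟨a, b⟩ (⟨h1, h2⟩ | ⟨h1, h2⟩ | ⟨h1, h2⟩)
    · exact H.loopless.irrefl b h2
    · exact G.loopless.irrefl a h1
    · exact G.loopless.irrefl a h1

/-- The lexicographical product of two simple graphs. -/
def lexProd (G : SimpleGraph V) (H : SimpleGraph W) : SimpleGraph (V × W) where
  Adj p q := G.Adj p.1 q.1 ∨ (p.1 = q.1 ∧ H.Adj p.2 q.2)
  symm := by
    refine ⟨?_⟩
    rintro ⟨a, b⟩ ⟨x, y⟩ (h | ⟨h1, h2⟩)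
    · exact Or.inl h.symm
    · exact Or.inr ⟨h1.symm, h2.symm⟩
  loopless := by
    refine ⟨?_⟩
    rintro ⟨a, b⟩ (h | ⟨h1, h2⟩)
    · exact G.loopless.irrefl a h
    · exact H.loopless.irrefl b h2

instance {G : SimpleGraph V} {H : SimpleGraph W} [DecidableEq V] [DecidableEq W]
    [DecidableRel G.Adj] [DecidableRel H.Adj] : DecidableRel (strongProd G H).Adj := fun p q =>
  show Decidable ((p.1 = q.1 ∧ H.Adj p.2 q.2) ∨ (G.Adj p.1 q.1 ∧ p.2 = q.2) ∨
    (G.Adj p.1 q.1 ∧ H.Adj p.2 q.2)) from inferInstance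

/-- A colouring is `d`-improper if every colour class induces a subgraph of
maximum degree at most `d`. -/
def IsImproperColoring (G : SimpleGraph V) (d : ℕ) {α : Type*} (c : V → α) : Prop :=
  ∀ v : V, ({w | G.Adj v w ∧ c w = c v} : Set V).ncard ≤ d

/-- The `d`-improper chromatic number. -/
noncomputable def improperChromaticNumber (G : SimpleGraph V) (d : ℕ) : ℕ :=
  sInf {n | ∃ c : V → Fin n, IsImproperColoring G d c}

/-- A colouring is `t`-clustered if every monochromatic connected component has at
most `t` vertices. -/
def IsClusteredColoring (G : SimpleGraph V) (t : ℕ) {α : Type*} (c : V → α) : Prop :=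
  ∀ v : V,
    ({w | Relation.ReflTransGen (fun a b => G.Adj a b ∧ c a = c b) v w} : Set V).ncard ≤ t

/-- The `t`-clustered chromatic number. -/
noncomputable def clusteredChromaticNumber (G : SimpleGraph V) (t : ℕ) : ℕ :=
  sInf {n | ∃ c : V → Fin n, IsClusteredColoring G t c}

/-- The chromatic number: least `n` admitting a proper colouring with `n` colours. -/
noncomputable def chromNum (G : SimpleGraph V) : ℕ :=
  sInf {n | ∃ c : V → Fin n, ∀ u v, G.Adj u v → c u ≠ c v}

/-- The `b`-fold `d`-improper chromatic number: least number of colours in an assignment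
of `b` colours to each vertex such that, for every colour `x`, the set of vertices whose
colour set contains `x` induces a subgraph of maximum degree at most `d`. -/
noncomputable def bFoldImproperChromaticNumber (G : SimpleGraph V) (b d : ℕ) : ℕ :=
  sInf {n | ∃ c : V → Finset (Fin n), (∀ v, (c v).card = b) ∧
    ∀ v : V, ∀ x ∈ c v, ({w | G.Adj v w ∧ x ∈ c w} : Set V).ncard ≤ d}

/-- The (proper) `b`-fold chromatic number. -/
noncomputable def bFoldChromaticNumber (G : SimpleGraph V) (b : ℕ) : ℕ :=
  bFoldImproperChromaticNumber G b 0

/-- The `b`-fold `t`-clustered chromatic number. -/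
noncomputable def bFoldClusteredChromaticNumber (G : SimpleGraph V) (b t : ℕ) : ℕ :=
  sInf {n | ∃ c : V → Finset (Fin n), (∀ v, (c v).card = b) ∧
    ∀ x : Fin n, ∀ v : V, x ∈ c v →
      ({w | Relation.ReflTransGen (fun a b' => G.Adj a b' ∧ x ∈ c a ∧ x ∈ c b') v w} :
        Set V).ncard ≤ t}

/-- The fractional chromatic number `χ_f(G) = inf { χ_b(G)/b : b ≥ 1 }`. -/
noncomputable def fracChromaticNumber (G : SimpleGraph V) : ℝ :=
  sInf {x : ℝ | ∃ b : ℕ, 0 < b ∧ x = (bFoldChromaticNumber G b : ℝ) / b}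

/-- The fractional `d`-improper chromatic number. -/
noncomputable def fracImproperChromaticNumber (G : SimpleGraph V) (d : ℕ) : ℝ :=
  sInf {x : ℝ | ∃ b : ℕ, 0 < b ∧ x = (bFoldImproperChromaticNumber G b d : ℝ) / b}

/-- The fractional `t`-clustered chromatic number. -/
noncomputable def fracClusteredChromaticNumber (G : SimpleGraph V) (t : ℕ) : ℝ :=
  sInf {x : ℝ | ∃ b : ℕ, 0 < b ∧ x = (bFoldClusteredChromaticNumber G b t : ℝ) / b}

/-- `lam` lists the eigenvalues of the Hermitian matrix `A` (with multiplicity) in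
non-increasing order. -/
def IsEigList {n : ℕ} {A : Matrix (Fin n) (Fin n) ℝ} (hA : A.IsHermitian)
    (lam : Fin n → ℝ) : Prop :=
  Antitone lam ∧ ∃ σ : Equiv.Perm (Fin n), lam = hA.eigenvalues ∘ σ

/-- The largest size of a vertex subset inducing a subgraph of maximum degree at most `d`. -/
noncomputable def maxImproperIndep (G : SimpleGraph V) (d : ℕ) : ℕ :=
  sSup {k | ∃ s : Set V, s.ncard = k ∧ ∀ v ∈ s, ({w | w ∈ s ∧ G.Adj v w} : Set V).ncard ≤ d}

end ImproperPaper

namespace Aux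
variable {n : ℕ} {A : Matrix (Fin n) (Fin n) ℝ}

lemma rayleigh_core (hA : A.IsHermitian) (x : Fin n → ℝ) :
    ∃ y : Fin n → ℝ, (x ⬝ᵥ x = ∑ i, y i ^ 2) ∧
      (x ⬝ᵥ (A *ᵥ x) = ∑ i, hA.eigenvalues i * y i ^ 2) ∧
      (∀ t : ℝ, (∀ i, hA.eigenvalues i * y i = t * y i) → A *ᵥ x = t • x) := by
  classical
  set U : Matrix (Fin n) (Fin n) ℝ := (hA.eigenvectorUnitary : Matrix (Fin n) (Fin n) ℝ) with hU
  have hUmem := hA.eigenvectorUnitary.2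
  have h1 : star U * U = 1 := (Matrix.mem_unitaryGroup_iff'.mp hUmem)
  have h2 : U * star U = 1 := (Matrix.mem_unitaryGroup_iff.mp hUmem)
  set y : Fin n → ℝ := star U *ᵥ x with hy
  have hUy : U *ᵥ y = x := by
    rw [hy, mulVec_mulVec, h2, one_mulVec]
  have hdot : ∀ z : Fin n → ℝ, x ⬝ᵥ (U *ᵥ z) = y ⬝ᵥ z := by
    intro z
    rw [dotProduct_mulVec, hy]
    congr 1
    ext i
    simp [vecMul, mulVec, dotProduct, star, conjTranspose, transpose, mul_comm]
  have hspec : A = U * diagonal hA.eigenvalues * star U := by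
    have h := hA.spectral_theorem
    rw [Unitary.conjStarAlgAut_apply, RCLike.ofReal_real_eq_id, Function.id_comp] at h
    exact h
  have hAx : A *ᵥ x = U *ᵥ (diagonal hA.eigenvalues *ᵥ y) := by
    show _ = U *ᵥ (diagonal hA.eigenvalues *ᵥ (star U *ᵥ x))
    rw [mulVec_mulVec, mulVec_mulVec, ← hspec]
  refine ⟨y, ?_, ?_, ?_⟩
  · have : x ⬝ᵥ x = y ⬝ᵥ y := by
      calc x ⬝ᵥ x = x ⬝ᵥ (U *ᵥ y) := by rw [hUy]
        _ = y ⬝ᵥ y := hdot y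
    rw [this, dotProduct]
    exact Finset.sum_congr rfl fun i _ => (sq (y i)).symm ▸ rfl
  · rw [hAx, hdot, dotProduct]
    refine Finset.sum_congr rfl fun i _ => ?_
    rw [mulVec_diagonal]
    ring
  · intro t ht
    have : diagonal hA.eigenvalues *ᵥ y = t • y := by
      ext i; simp [mulVec_diagonal, ht i]
    rw [hAx, this, mulVec_smul, hUy]

lemma rayleigh_le (hA : A.IsHermitian) {t : ℝ} (ht : ∀ i, hA.eigenvalues i ≤ t)
    (x : Fin n → ℝ) : x ⬝ᵥ (A *ᵥ x) ≤ t * (x ⬝ᵥ x) := by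
  obtain ⟨y, h1, h2, _⟩ := rayleigh_core hA x
  rw [h1, h2, Finset.mul_sum]
  exact Finset.sum_le_sum fun i _ =>
    mul_le_mul_of_nonneg_right (ht i) (sq_nonneg _)

lemma rayleigh_ge (hA : A.IsHermitian) {t : ℝ} (ht : ∀ i, t ≤ hA.eigenvalues i)
    (x : Fin n → ℝ) : t * (x ⬝ᵥ x) ≤ x ⬝ᵥ (A *ᵥ x) := by
  obtain ⟨y, h1, h2, _⟩ := rayleigh_core hA x
  rw [h1, h2, Finset.mul_sum]
  exact Finset.sum_le_sum fun i _ =>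
    mul_le_mul_of_nonneg_right (ht i) (sq_nonneg _)

lemma rayleigh_eq_min (hA : A.IsHermitian) {t : ℝ} (ht : ∀ i, t ≤ hA.eigenvalues i)
    {x : Fin n → ℝ} (hx : x ⬝ᵥ (A *ᵥ x) = t * (x ⬝ᵥ x)) : A *ᵥ x = t • x := by
  obtain ⟨y, h1, h2, h3⟩ := rayleigh_core hA x
  refine h3 t fun i => ?_
  have hz : ∑ i, (hA.eigenvalues i - t) * y i ^ 2 = 0 := by
    have : ∑ i, (hA.eigenvalues i - t) * y i ^ 2
        = (∑ i, hA.eigenvalues i * y i ^ 2) - t * ∑ i, y i ^ 2 := by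
      rw [Finset.mul_sum, ← Finset.sum_sub_distrib]
      exact Finset.sum_congr rfl fun i _ => by ring
    rw [this, ← h1, ← h2, hx, sub_self]
  have hterm : ∀ i ∈ Finset.univ, (0:ℝ) ≤ (hA.eigenvalues i - t) * y i ^ 2 :=
    fun i _ => mul_nonneg (sub_nonneg.mpr (ht i)) (sq_nonneg _)
  have := (Finset.sum_eq_zero_iff_of_nonneg hterm).mp hz i (Finset.mem_univ i)
  rcases mul_eq_zero.mp this with h | h
  · rw [sub_eq_zero] at h; rw [h]
  · have : y i = 0 := pow_eq_zero_iff (two_ne_zero) |>.mp h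
    rw [this, mul_zero, mul_zero]

lemma rayleigh_eq_max (hA : A.IsHermitian) {t : ℝ} (ht : ∀ i, hA.eigenvalues i ≤ t)
    {x : Fin n → ℝ} (hx : x ⬝ᵥ (A *ᵥ x) = t * (x ⬝ᵥ x)) : A *ᵥ x = t • x := by
  obtain ⟨y, h1, h2, h3⟩ := rayleigh_core hA x
  refine h3 t fun i => ?_
  have hz : ∑ i, (t - hA.eigenvalues i) * y i ^ 2 = 0 := by
    have : ∑ i, (t - hA.eigenvalues i) * y i ^ 2
        = t * (∑ i, y i ^ 2) - ∑ i, hA.eigenvalues i * y i ^ 2 := by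
      rw [Finset.mul_sum, ← Finset.sum_sub_distrib]
      exact Finset.sum_congr rfl fun i _ => by ring
    rw [this, ← h1, ← h2, hx, sub_self]
  have hterm : ∀ i ∈ Finset.univ, (0:ℝ) ≤ (t - hA.eigenvalues i) * y i ^ 2 :=
    fun i _ => mul_nonneg (sub_nonneg.mpr (ht i)) (sq_nonneg _)
  have := (Finset.sum_eq_zero_iff_of_nonneg hterm).mp hz i (Finset.mem_univ i)
  rcases mul_eq_zero.mp this with h | h
  · rw [sub_eq_zero] at h; rw [← h]
  · have : y i = 0 := pow_eq_zero_iff (two_ne_zero) |>.mp h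
    rw [this, mul_zero, mul_zero]


lemma adj_expand {n : ℕ} (G : SimpleGraph (Fin n)) [DecidableRel G.Adj] (w z : Fin n → ℝ) :
    w ⬝ᵥ (G.adjMatrix ℝ *ᵥ z) = ∑ a, ∑ b, (G.adjMatrix ℝ) a b * (w a * z b) := by
  simp only [dotProduct, mulVec, Finset.mul_sum]
  exact Finset.sum_congr rfl fun a _ => Finset.sum_congr rfl fun b _ => by ring

lemma perron {n : ℕ} (G : SimpleGraph (Fin n)) [DecidableRel G.Adj] (hconn : G.Connected)
    (hA : (G.adjMatrix ℝ).IsHermitian) {t : ℝ}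
    (hmax : ∀ i, hA.eigenvalues i ≤ t) (hex : ∃ i, hA.eigenvalues i = t) :
    ∃ u : Fin n → ℝ, (∀ v, 0 < u v) ∧ G.adjMatrix ℝ *ᵥ u = t • u := by
  classical
  obtain ⟨i0, hi0⟩ := hex
  set v : Fin n → ℝ := ⇑(hA.eigenvectorBasis i0) with hvdef
  have hv : G.adjMatrix ℝ *ᵥ v = t • v := by
    rw [hvdef, hA.mulVec_eigenvectorBasis i0, hi0]
  have hvne : v ≠ 0 := by
    intro h
    refine hA.eigenvectorBasis.orthonormal.ne_zero i0 ?_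
    ext w
    exact congrFun h w
  set u : Fin n → ℝ := fun w => |v w| with hudef
  have hunn : ∀ w, 0 ≤ u w := fun w => abs_nonneg _
  have hvv : v ⬝ᵥ v = u ⬝ᵥ u := by
    refine Finset.sum_congr rfl fun a _ => ?_
    rw [hudef]; simp [← sq, sq_abs]
  have hge : t * (u ⬝ᵥ u) ≤ u ⬝ᵥ (G.adjMatrix ℝ *ᵥ u) := by
    rw [← hvv]
    have h1 : v ⬝ᵥ (G.adjMatrix ℝ *ᵥ v) = t * (v ⬝ᵥ v) := by
      rw [hv, dotProduct_smul, smul_eq_mul]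
    rw [← h1, adj_expand, adj_expand]
    refine Finset.sum_le_sum fun a _ => Finset.sum_le_sum fun b _ => ?_
    have hnn : (0:ℝ) ≤ (G.adjMatrix ℝ) a b := by
      rw [SimpleGraph.adjMatrix_apply]; positivity
    refine mul_le_mul_of_nonneg_left ?_ hnn
    calc v a * v b ≤ |v a * v b| := le_abs_self _
      _ = u a * u b := abs_mul _ _
  have hle : u ⬝ᵥ (G.adjMatrix ℝ *ᵥ u) ≤ t * (u ⬝ᵥ u) := rayleigh_le hA hmax u
  have hequ : u ⬝ᵥ (G.adjMatrix ℝ *ᵥ u) = t * (u ⬝ᵥ u) := le_antisymm hle hge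
  have hu : G.adjMatrix ℝ *ᵥ u = t • u := rayleigh_eq_max hA hmax hequ
  have hzero : ∀ a b : Fin n, G.Adj a b → u a = 0 → u b = 0 := by
    intro a b hab h0
    have h1 : (G.adjMatrix ℝ *ᵥ u) a = 0 := by
      rw [hu]; simp [h0]
    have h2 : ∑ q, (G.adjMatrix ℝ) a q * u q = 0 := by
      rw [← h1]; rfl
    have h3 : ∀ q ∈ Finset.univ, (0:ℝ) ≤ (G.adjMatrix ℝ) a q * u q := by
      intro q _
      refine mul_nonneg ?_ (hunn q)
      rw [SimpleGraph.adjMatrix_apply]; positivity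
    have h4 := (Finset.sum_eq_zero_iff_of_nonneg h3).mp h2 b (Finset.mem_univ b)
    rw [SimpleGraph.adjMatrix_apply, if_pos hab, one_mul] at h4
    exact h4
  have hwalk : ∀ a b : Fin n, G.Walk a b → u a = 0 → u b = 0 := by
    intro a b p
    induction p with
    | nil => exact id
    | cons h q ih => exact fun h0 => ih (hzero _ _ h h0)
  have hne : ∀ w, u w ≠ 0 := by
    intro w0 h0
    have hall : ∀ w, u w = 0 := fun w => (hconn w0 w).elim fun p => hwalk _ _ p h0
    refine hvne (funext fun w => ?_)
    have := hall w
    rw [hudef] at this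
    simpa [abs_eq_zero] using this
  exact ⟨u, fun w => lt_of_le_of_ne (hunn w) (Ne.symm (hne w)), hu⟩

lemma single_dot_mul {n : ℕ} (M : Matrix (Fin n) (Fin n) ℝ) (a b : Fin n) (r s : ℝ) :
    Pi.single a r ⬝ᵥ (M *ᵥ Pi.single b s) = r * M a b * s := by
  simp [dotProduct, mulVec, Pi.single_apply, Finset.mul_sum, Finset.sum_ite_eq,
    Finset.sum_ite_eq', mul_comm, mul_assoc]
  ring

lemma single_dot_single {n : ℕ} (a b : Fin n) (r s : ℝ) :
    (Pi.single a r : Fin n → ℝ) ⬝ᵥ Pi.single b s = if a = b then r * s else 0 := by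
  simp [dotProduct, Pi.single_apply, Finset.sum_ite_eq, Finset.sum_ite_eq', ite_and]
  by_cases h : a = b
  · rw [if_pos h, if_pos h.symm]
  · rw [if_neg h, if_neg (Ne.symm h)]

section Roots

lemma omega_abs_facts {m : ℕ} (hm : m ≠ 0) :
    ∀ t : ℕ, (starRingEnd ℂ) ((Complex.exp (2 * Real.pi * Complex.I / m)) ^ t) *
      (Complex.exp (2 * Real.pi * Complex.I / m)) ^ t = 1 := by
  intro t
  set ω := Complex.exp (2 * Real.pi * Complex.I / m) with hω
  have habs : ‖ω‖ = 1 := by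
    rw [hω]
    have : 2 * (Real.pi:ℂ) * Complex.I / m = ((2 * Real.pi / m : ℝ) : ℂ) * Complex.I := by
      push_cast; ring
    rw [this, Complex.norm_exp_ofReal_mul_I]
  have h1 : (starRingEnd ℂ) (ω ^ t) * ω ^ t = ((Complex.normSq (ω ^ t) : ℝ) : ℂ) := by
    rw [mul_comm, Complex.mul_conj]
  rw [h1]
  have : Complex.normSq (ω ^ t) = 1 := by
    rw [← Complex.sq_norm, norm_pow, habs, one_pow, one_pow]
  rw [this, Complex.ofReal_one]

lemma delta_sum {m : ℕ} (hm : m ≠ 0) (a b : Fin m) :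
    ∑ k ∈ Finset.range m,
      (starRingEnd ℂ) ((Complex.exp (2 * Real.pi * Complex.I / m)) ^ (a.val * k)) *
        (Complex.exp (2 * Real.pi * Complex.I / m)) ^ (b.val * k)
      = if a = b then (m:ℂ) else 0 := by
  set ω := Complex.exp (2 * Real.pi * Complex.I / m) with hω
  have hprim : IsPrimitiveRoot ω m := Complex.isPrimitiveRoot_exp m hm
  have hm1 : ω ^ m = 1 := hprim.pow_eq_one
  have hconj := omega_abs_facts hm
  set ζ := (starRingEnd ℂ) (ω ^ a.val) * ω ^ b.val with hζ
  have hterm : ∀ k, (starRingEnd ℂ) (ω ^ (a.val * k)) * ω ^ (b.val * k) = ζ ^ k := by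
    intro k
    rw [hζ, pow_mul, pow_mul, map_pow, mul_pow]
  rw [Finset.sum_congr rfl fun k _ => hterm k]
  by_cases hab : a = b
  · subst hab
    rw [if_pos rfl]
    have : ζ = 1 := hconj a.val
    rw [this]
    simp
  · rw [if_neg hab]
    have hζm : ζ ^ m = 1 := by
      rw [hζ, mul_pow, ← map_pow, ← pow_mul, ← pow_mul, mul_comm a.val m, mul_comm b.val m,
        pow_mul, pow_mul, hm1, one_pow, one_pow, _root_.map_one, one_mul]
    have hζne : ζ ≠ 1 := by
      intro h
      have h2 : ω ^ b.val = ω ^ a.val := by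
        have h3 := congrArg (fun z => ω ^ a.val * z) h
        simp only [mul_one] at h3
        rw [hζ, ← mul_assoc, mul_comm (ω ^ a.val) ((starRingEnd ℂ) (ω ^ a.val)),
          hconj a.val, one_mul] at h3
        exact h3
      exact hab (Fin.ext (hprim.pow_inj a.isLt b.isLt h2.symm))
    have hgs := geom_sum_mul ζ m
    rw [hζm, sub_self] at hgs
    rcases mul_eq_zero.mp hgs with h | h
    · exact h
    · exact absurd (sub_eq_zero.mp h) hζne

lemma delta_sum_re {m : ℕ} (hm : m ≠ 0) (a b : Fin m) :
    ∑ k ∈ Finset.range m,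
      (((Complex.exp (2 * Real.pi * Complex.I / m)) ^ (a.val * k)).re *
        ((Complex.exp (2 * Real.pi * Complex.I / m)) ^ (b.val * k)).re +
       ((Complex.exp (2 * Real.pi * Complex.I / m)) ^ (a.val * k)).im *
        ((Complex.exp (2 * Real.pi * Complex.I / m)) ^ (b.val * k)).im)
      = if a = b then (m:ℝ) else 0 := by
  have h := congrArg Complex.re (delta_sum hm a b)
  rw [Complex.re_sum] at h
  convert h using 1
  · refine Finset.sum_congr rfl fun k _ => ?_
    rw [Complex.mul_re, Complex.conj_re, Complex.conj_im]
    ring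
  · by_cases hab : a = b <;> simp [hab]

end Roots
end Aux

open ImproperPaper in
set_option maxHeartbeats 2000000 in
theorem stmt_2 {n : ℕ} (hn : 1 ≤ n) (G : SimpleGraph (Fin n)) [DecidableRel G.Adj]
    (hconn : G.Connected) (hedge : ∃ u v : Fin n, G.Adj u v) (d m : ℕ)
    (hA : (G.adjMatrix ℝ).IsHermitian) (lam : Fin n → ℝ) (hlam : IsEigList hA lam)
    (hm : improperChromaticNumber G d = m)
    (heq : (m : ℝ) =
      (lam ⟨0, by omega⟩ - lam ⟨n - 1, by omega⟩) / ((d : ℝ) - lam ⟨n - 1, by omega⟩)) :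
    ∀ c : Fin n → Fin m, IsImproperColoring G d c →
      (∀ v : Fin n, ({w | G.Adj v w ∧ c w = c v} : Set (Fin n)).ncard = d) ∧
      ∃ u : Fin n → ℝ, (∀ v, 0 < u v) ∧
        G.adjMatrix ℝ *ᵥ u = lam ⟨0, by omega⟩ • u ∧
        ∀ (i j : Fin m), ∀ v w : Fin n, c v = i → c w = i →
          (1 / u v) * ∑ w' ∈ Finset.univ.filter (fun w' => G.Adj v w' ∧ c w' = j), u w' =
          (1 / u w) * ∑ w' ∈ Finset.univ.filter (fun w' => G.Adj w w' ∧ c w' = j), u w' := by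
  intro c hc
  classical
  have hnpos : 0 < n := hn
  have hn1lt : n - 1 < n := by omega
  obtain ⟨hanti, σ, hσ⟩ := hlam
  set l1 := lam ⟨0, hnpos⟩ with hl1def
  set ln := lam ⟨n - 1, hn1lt⟩ with hlndef
  have heq' : (m : ℝ) = (l1 - ln) / ((d : ℝ) - ln) := heq
  set A := G.adjMatrix ℝ with hAdef
  -- eigenvalue extremality
  have hmax : ∀ i, hA.eigenvalues i ≤ l1 := by
    intro i
    have h1 : hA.eigenvalues i = lam (σ.symm i) := by
      rw [hσ]; simp
    rw [h1, hl1def]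
    exact hanti (by simp [Fin.le_def])
  have hmin : ∀ i, ln ≤ hA.eigenvalues i := by
    intro i
    have h1 : hA.eigenvalues i = lam (σ.symm i) := by
      rw [hσ]; simp
    rw [h1, hlndef]
    refine hanti ?_
    rw [Fin.le_def]
    show (σ.symm i).val ≤ n - 1
    have := (σ.symm i).isLt
    omega
  have hl1eig : ∃ i, hA.eigenvalues i = l1 := by
    refine ⟨σ ⟨0, hnpos⟩, ?_⟩
    rw [hl1def, hσ]; rfl
  -- basic Rayleigh facts
  have Rge : ∀ x : Fin n → ℝ, ln * (x ⬝ᵥ x) ≤ x ⬝ᵥ (A *ᵥ x) :=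
    fun x => Aux.rayleigh_ge hA hmin x
  have Rle : ∀ x : Fin n → ℝ, x ⬝ᵥ (A *ᵥ x) ≤ l1 * (x ⬝ᵥ x) :=
    fun x => Aux.rayleigh_le hA hmax x
  have Req : ∀ x : Fin n → ℝ, x ⬝ᵥ (A *ᵥ x) = ln * (x ⬝ᵥ x) → A *ᵥ x = ln • x :=
    fun x hx => Aux.rayleigh_eq_min hA hmin hx
  -- l1 ≥ 1, ln ≤ -1
  obtain ⟨a0, b0, hab0⟩ := hedge
  have hne0 : a0 ≠ b0 := G.ne_of_adj hab0
  have hqd : ∀ r s : ℝ, (Pi.single a0 r + Pi.single b0 s : Fin n → ℝ) ⬝ᵥ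
      (A *ᵥ (Pi.single a0 r + Pi.single b0 s)) = 2 * (r * s) := by
    intro r s
    rw [Matrix.mulVec_add, dotProduct_add, add_dotProduct, add_dotProduct,
      Aux.single_dot_mul, Aux.single_dot_mul, Aux.single_dot_mul, Aux.single_dot_mul]
    have haa : A a0 a0 = 0 := by simp [hAdef]
    have hbb : A b0 b0 = 0 := by simp [hAdef]
    have hab : A a0 b0 = 1 := by simp [hAdef, hab0]
    have hba : A b0 a0 = 1 := by simp [hAdef, hab0.symm]
    rw [haa, hbb, hab, hba]
    ring
  have hqn : ∀ r s : ℝ, (Pi.single a0 r + Pi.single b0 s : Fin n → ℝ) ⬝ᵥ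
      (Pi.single a0 r + Pi.single b0 s) = r ^ 2 + s ^ 2 := by
    intro r s
    rw [dotProduct_add, add_dotProduct, add_dotProduct,
      Aux.single_dot_single, Aux.single_dot_single, Aux.single_dot_single,
      Aux.single_dot_single]
    rw [if_pos rfl, if_pos rfl, if_neg hne0, if_neg (Ne.symm hne0)]
    ring
  have hl1pos : (0:ℝ) < l1 := by
    have h1 := Rle (Pi.single a0 1 + Pi.single b0 1)
    rw [hqd 1 1, hqn 1 1] at h1
    norm_num at h1
    linarith
  have hlnneg : ln < 0 := by
    have h1 := Rge (Pi.single a0 1 + Pi.single b0 (-1))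
    rw [hqd 1 (-1), hqn 1 (-1)] at h1
    norm_num at h1
    linarith
  have hdln : (0:ℝ) < (d : ℝ) - ln := by
    have : (0:ℝ) ≤ (d:ℝ) := Nat.cast_nonneg d
    linarith
  have hm' : l1 - ln = (m:ℝ) * ((d : ℝ) - ln) := by
    rw [eq_div_iff (ne_of_gt hdln)] at heq'
    linarith
  have hmpos : (0:ℝ) < (m:ℝ) := by
    rw [heq']
    apply div_pos _ hdln
    linarith
  have hm0 : m ≠ 0 := by
    intro h; rw [h] at hmpos; norm_num at hmpos
  have hmR : (m:ℝ) ≠ 0 := ne_of_gt hmpos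
  -- Perron eigenvector
  obtain ⟨u, hupos, huA⟩ := Aux.perron G hconn hA hmax hl1eig
  set S := ∑ v, u v ^ 2 with hSdef
  have hSdot : u ⬝ᵥ u = S := by
    rw [hSdef, dotProduct]
    exact Finset.sum_congr rfl fun v _ => (sq (u v)).symm
  have hSpos : 0 < S := by
    rw [hSdef]
    refine Finset.sum_pos (fun v _ => pow_pos (hupos v) 2) ⟨⟨0, hnpos⟩, Finset.mem_univ _⟩
  -- roots of unity setup
  set ω := Complex.exp (2 * Real.pi * Complex.I / m) with hωdef
  have hns : ∀ t : ℕ, (ω ^ t).re ^ 2 + (ω ^ t).im ^ 2 = 1 := by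
    intro t
    have h := Aux.omega_abs_facts hm0 t
    have h2 := congrArg Complex.re h
    rw [Complex.mul_re, Complex.conj_re, Complex.conj_im] at h2
    simp only [Complex.one_re] at h2
    nlinarith [h2]
  set X : ℕ → Fin n → ℝ := fun k v => (ω ^ ((c v).val * k)).re * u v with hX
  set Y : ℕ → Fin n → ℝ := fun k v => (ω ^ ((c v).val * k)).im * u v with hY
  set R : ℕ → ℝ := fun k => X k ⬝ᵥ (A *ᵥ X k) + Y k ⬝ᵥ (A *ᵥ Y k) with hR
  have hXYnorm : ∀ k, X k ⬝ᵥ X k + Y k ⬝ᵥ Y k = S := by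
    intro k
    rw [dotProduct, dotProduct, ← Finset.sum_add_distrib, hSdef]
    refine Finset.sum_congr rfl fun v _ => ?_
    have h := hns ((c v).val * k)
    simp only [hX, hY]
    linear_combination (u v ^ 2) * h
  set E := ∑ v, ∑ w, (if G.Adj v w ∧ c w = c v then u v * u w else 0) with hE
  set deg : Fin n → ℕ :=
    fun v => (Finset.univ.filter (fun w => G.Adj v w ∧ c w = c v)).card with hdeg
  have hdegd : ∀ v, deg v ≤ d := by
    intro v
    have h := hc v
    have h2 : ({w | G.Adj v w ∧ c w = c v} : Set (Fin n)).ncard = deg v := by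
      rw [Set.ncard_eq_toFinset_card', Set.toFinset_setOf]
    rwa [h2] at h
  have hncard : ∀ v, ({w | G.Adj v w ∧ c w = c v} : Set (Fin n)).ncard = deg v := by
    intro v
    rw [Set.ncard_eq_toFinset_card', Set.toFinset_setOf]
  -- sum over k of R k equals m * E
  have hsumR : ∑ k ∈ Finset.range m, R k = m * E := by
    have h1 : ∀ k, R k = ∑ v, ∑ w, A v w * (X k v * X k w + Y k v * Y k w) := by
      intro k
      simp only [hR]
      rw [Aux.adj_expand, Aux.adj_expand, ← Finset.sum_add_distrib]
      refine Finset.sum_congr rfl fun v _ => ?_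
      rw [← Finset.sum_add_distrib]
      refine Finset.sum_congr rfl fun w _ => ?_
      ring
    calc ∑ k ∈ Finset.range m, R k
        = ∑ k ∈ Finset.range m, ∑ v, ∑ w, A v w * (X k v * X k w + Y k v * Y k w) :=
          Finset.sum_congr rfl fun k _ => h1 k
      _ = ∑ v, ∑ w, ∑ k ∈ Finset.range m, A v w * (X k v * X k w + Y k v * Y k w) := by
          rw [Finset.sum_comm]
          exact Finset.sum_congr rfl fun v _ => Finset.sum_comm
      _ = ∑ v, ∑ w, (m:ℝ) * (if G.Adj v w ∧ c w = c v then u v * u w else 0) := by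
          refine Finset.sum_congr rfl fun v _ => Finset.sum_congr rfl fun w _ => ?_
          have h2 : ∀ k, A v w * (X k v * X k w + Y k v * Y k w)
              = A v w * (u v * u w) *
                ((ω ^ ((c v).val * k)).re * (ω ^ ((c w).val * k)).re +
                 (ω ^ ((c v).val * k)).im * (ω ^ ((c w).val * k)).im) := by
            intro k
            simp only [hX, hY]
            ring
          rw [Finset.sum_congr rfl fun k _ => h2 k, ← Finset.mul_sum,
            Aux.delta_sum_re hm0 (c v) (c w)]
          by_cases hadj : G.Adj v w
          · by_cases hcol : c w = c v
            · rw [if_pos hcol.symm, if_pos ⟨hadj, hcol⟩]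
              have : A v w = 1 := by simp [hAdef, hadj]
              rw [this]
              ring
            · rw [if_neg (fun h : c v = c w => hcol h.symm),
                if_neg (fun h : G.Adj v w ∧ c w = c v => hcol h.2)]
              ring
          · have : A v w = 0 := by simp [hAdef, hadj]
            rw [this, if_neg (fun h : G.Adj v w ∧ c w = c v => hadj h.1)]
            ring
      _ = m * E := by
          rw [hE, Finset.mul_sum]
          exact Finset.sum_congr rfl fun v _ => by rw [Finset.mul_sum]
  -- R 0
  have hX0 : X 0 = u := by
    funext v; simp [hX]
  have hY0 : Y 0 = 0 := by
    funext v; simp [hY]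
  have hR0 : R 0 = l1 * S := by
    rw [hR]
    simp only [hX0, hY0]
    rw [huA, dotProduct_smul, smul_eq_mul, hSdot]
    simp
  -- lower bound for each R k
  have hRk : ∀ k, ln * S ≤ R k := by
    intro k
    have h1 := Rge (X k)
    have h2 := Rge (Y k)
    have h3 := hXYnorm k
    have h4 : ln * (X k ⬝ᵥ X k) + ln * (Y k ⬝ᵥ Y k) = ln * S := by
      rw [← h3]; ring
    simp only [hR]
    linarith [h1, h2]
  -- E upper bounds
  have hEub : E ≤ ∑ v, (deg v : ℝ) * u v ^ 2 := by
    have hsym : ∀ v w : Fin n, (G.Adj v w ∧ c w = c v) ↔ (G.Adj w v ∧ c v = c w) := by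
      intro v w
      constructor
      · rintro ⟨h1, h2⟩; exact ⟨h1.symm, h2.symm⟩
      · rintro ⟨h1, h2⟩; exact ⟨h1.symm, h2.symm⟩
    have heval : ∀ v : Fin n, ∑ w, (if G.Adj v w ∧ c w = c v then u v ^ 2 else 0)
        = (deg v : ℝ) * u v ^ 2 := by
      intro v
      calc ∑ w, (if G.Adj v w ∧ c w = c v then u v ^ 2 else 0)
          = ∑ w ∈ Finset.univ.filter (fun w => G.Adj v w ∧ c w = c v), u v ^ 2 :=
            (Finset.sum_filter _ _).symm
        _ = (deg v) • (u v ^ 2) := by rw [Finset.sum_const]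
        _ = (deg v : ℝ) * u v ^ 2 := nsmul_eq_mul _ _
    have hswap : ∑ v, ∑ w, (if G.Adj v w ∧ c w = c v then u w ^ 2 else 0)
        = ∑ v, (deg v : ℝ) * u v ^ 2 := by
      rw [Finset.sum_comm]
      refine Finset.sum_congr rfl fun w _ => ?_
      rw [← heval w]
      refine Finset.sum_congr rfl fun v _ => ?_
      exact if_congr (hsym v w) rfl rfl
    have hstep : E ≤ ∑ v, ∑ w,
        (if G.Adj v w ∧ c w = c v then (u v ^ 2 + u w ^ 2) / 2 else 0) := by
      rw [hE]
      refine Finset.sum_le_sum fun v _ => Finset.sum_le_sum fun w _ => ?_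
      by_cases h : G.Adj v w ∧ c w = c v
      · rw [if_pos h, if_pos h]
        nlinarith [sq_nonneg (u v - u w)]
      · rw [if_neg h, if_neg h]
    have hsplit : ∑ v, ∑ w, (if G.Adj v w ∧ c w = c v then (u v ^ 2 + u w ^ 2) / 2 else 0)
        = (∑ v, ∑ w, (if G.Adj v w ∧ c w = c v then u v ^ 2 else 0)) / 2
          + (∑ v, ∑ w, (if G.Adj v w ∧ c w = c v then u w ^ 2 else 0)) / 2 := by
      rw [Finset.sum_div, Finset.sum_div, ← Finset.sum_add_distrib]
      refine Finset.sum_congr rfl fun v _ => ?_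
      rw [Finset.sum_div, Finset.sum_div, ← Finset.sum_add_distrib]
      refine Finset.sum_congr rfl fun w _ => ?_
      by_cases h : G.Adj v w ∧ c w = c v
      · rw [if_pos h, if_pos h, if_pos h]; ring
      · rw [if_neg h, if_neg h, if_neg h]; ring
    have heval2 : ∑ v, ∑ w, (if G.Adj v w ∧ c w = c v then u v ^ 2 else 0)
        = ∑ v, (deg v : ℝ) * u v ^ 2 := Finset.sum_congr rfl fun v _ => heval v
    calc E ≤ _ := hstep
      _ = _ := hsplit
      _ = ∑ v, (deg v : ℝ) * u v ^ 2 := by rw [heval2, hswap]; ring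
  have hdegub : ∑ v, (deg v : ℝ) * u v ^ 2 ≤ d * S := by
    rw [hSdef, Finset.mul_sum]
    refine Finset.sum_le_sum fun v _ => ?_
    have h1 : (deg v : ℝ) ≤ (d : ℝ) := Nat.cast_le.mpr (hdegd v)
    nlinarith [sq_nonneg (u v), h1]
  -- the equality chain
  have hb : ∀ k ∈ Finset.range m,
      ln * S + (if k = 0 then (l1 - ln) * S else 0) ≤ R k := by
    intro k _
    by_cases hk : k = 0
    · subst hk
      rw [if_pos rfl, hR0]
      linarith
    · rw [if_neg hk]
      have := hRk k
      linarith
  have hbsum : ∑ k ∈ Finset.range m, (ln * S + (if k = 0 then (l1 - ln) * S else 0))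
      = (m:ℝ) * (d * S) := by
    rw [Finset.sum_add_distrib, Finset.sum_const, Finset.card_range,
      Finset.sum_ite_eq' (Finset.range m) 0 (fun _ => (l1 - ln) * S),
      if_pos (Finset.mem_range.mpr (Nat.pos_of_ne_zero hm0)), nsmul_eq_mul]
    show (m:ℝ) * (ln * S) + (l1 - ln) * S = (m:ℝ) * (d * S)
    linear_combination S * hm'
  have hlow : (m:ℝ) * (d * S) ≤ ∑ k ∈ Finset.range m, R k := by
    rw [← hbsum]
    exact Finset.sum_le_sum hb
  have hEds : E ≤ d * S := le_trans hEub hdegub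
  have hchain : ∑ k ∈ Finset.range m, R k = (m:ℝ) * (d * S) := by
    have h1 : ∑ k ∈ Finset.range m, R k ≤ (m:ℝ) * (d * S) := by
      rw [hsumR]
      exact mul_le_mul_of_nonneg_left hEds (le_of_lt hmpos)
    linarith [hlow]
  have hEeq : E = d * S := by
    have h1 : (m:ℝ) * E = (m:ℝ) * (d * S) := by rw [← hsumR, hchain]
    exact mul_left_cancel₀ hmR h1
  -- per-k equalities
  have hkeq : ∀ k ∈ Finset.range m, R k = ln * S + (if k = 0 then (l1 - ln) * S else 0) := by
    have hzsum : ∑ k ∈ Finset.range m,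
        (R k - (ln * S + (if k = 0 then (l1 - ln) * S else 0))) = 0 := by
      rw [Finset.sum_sub_distrib, hbsum, hchain, sub_self]
    have hnn : ∀ k ∈ Finset.range m,
        0 ≤ R k - (ln * S + (if k = 0 then (l1 - ln) * S else 0)) := by
      intro k hk
      have := hb k hk
      linarith
    intro k hk
    have := (Finset.sum_eq_zero_iff_of_nonneg hnn).mp hzsum k hk
    linarith
  -- eigen equations for X k, Y k
  have hXeig : ∀ k ∈ Finset.range m,
      A *ᵥ X k = (if k = 0 then l1 else ln) • X k ∧
      A *ᵥ Y k = (if k = 0 then l1 else ln) • Y k := by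
    intro k hk
    by_cases hk0 : k = 0
    · subst hk0
      rw [if_pos rfl]
      constructor
      · rw [hX0]
        exact huA
      · rw [hY0, Matrix.mulVec_zero, smul_zero]
    · rw [if_neg hk0]
      have hRkeq : R k = ln * S := by
        have h := hkeq k hk
        rw [if_neg hk0, add_zero] at h
        exact h
      have h1 := Rge (X k)
      have h2 := Rge (Y k)
      have h3 := hXYnorm k
      have h4 : ln * (X k ⬝ᵥ X k) + ln * (Y k ⬝ᵥ Y k) = ln * S := by
        rw [← h3]; ring
      have h5 : X k ⬝ᵥ (A *ᵥ X k) + Y k ⬝ᵥ (A *ᵥ Y k) = ln * S := by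
        rw [← hRkeq]
      have hXeq : X k ⬝ᵥ (A *ᵥ X k) = ln * (X k ⬝ᵥ X k) := by linarith
      have hYeq : Y k ⬝ᵥ (A *ᵥ Y k) = ln * (Y k ⬝ᵥ Y k) := by linarith
      exact ⟨Req _ hXeq, Req _ hYeq⟩
  -- first conclusion: degrees
  have hdegeq : ∀ v, deg v = d := by
    have hds : ∑ v, (deg v : ℝ) * u v ^ 2 = d * S := by
      have h1 : d * S ≤ ∑ v, (deg v : ℝ) * u v ^ 2 := by
        rw [← hEeq]
        exact hEub
      linarith [hdegub]
    have hzs : ∑ v, ((d : ℝ) - deg v) * u v ^ 2 = 0 := by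
      have : ∑ v, ((d : ℝ) - deg v) * u v ^ 2
          = (∑ v, (d:ℝ) * u v ^ 2) - ∑ v, (deg v : ℝ) * u v ^ 2 := by
        rw [← Finset.sum_sub_distrib]
        exact Finset.sum_congr rfl fun v _ => by ring
      rw [this, hds, ← Finset.mul_sum, ← hSdef]
      ring
    have hnn : ∀ v ∈ Finset.univ, (0:ℝ) ≤ ((d : ℝ) - deg v) * u v ^ 2 := by
      intro v _
      have h1 : (deg v : ℝ) ≤ (d:ℝ) := Nat.cast_le.mpr (hdegd v)
      nlinarith [sq_nonneg (u v)]
    intro v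
    have h0 := (Finset.sum_eq_zero_iff_of_nonneg hnn).mp hzs v (Finset.mem_univ v)
    have hu2 : u v ^ 2 ≠ 0 := ne_of_gt (pow_pos (hupos v) 2)
    have h1 : (d : ℝ) - deg v = 0 := by
      rcases mul_eq_zero.mp h0 with h | h
      · exact h
      · exact absurd h hu2
    have : (deg v : ℝ) = (d : ℝ) := by linarith
    exact_mod_cast this
  refine ⟨fun v => by rw [hncard v]; exact hdegeq v, u, hupos, huA, ?_⟩
  -- weight regularity
  have key : ∀ (j : Fin m) (v : Fin n),
      (m:ℝ) * (∑ w' ∈ Finset.univ.filter (fun w' => G.Adj v w' ∧ c w' = j), u w')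
        = u v * ((l1 - ln) + (if c v = j then (m:ℝ) * ln else 0)) := by
    intro j v
    have hzz : ∀ k ∈ Finset.range m,
        (∑ w, (A v w : ℂ) * (ω ^ ((c w).val * k) * (u w : ℂ)))
          = (((if k = 0 then l1 else ln) : ℝ) : ℂ) * (ω ^ ((c v).val * k) * (u v : ℂ)) := by
      intro k hk
      obtain ⟨hXk, hYk⟩ := hXeig k hk
      have hXkv : ∑ w, A v w * X k w = (if k = 0 then l1 else ln) * X k v := by
        have h := congrFun hXk v
        simpa [Matrix.mulVec, dotProduct] using h
      have hYkv : ∑ w, A v w * Y k w = (if k = 0 then l1 else ln) * Y k v := by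
        have h := congrFun hYk v
        simpa [Matrix.mulVec, dotProduct] using h
      apply Complex.ext
      · rw [Complex.re_sum]
        have hterm : ∀ w : Fin n, ((A v w : ℂ) * (ω ^ ((c w).val * k) * (u w : ℂ))).re
            = A v w * X k w := by
          intro w
          simp only [hX, Complex.mul_re, Complex.mul_im, Complex.ofReal_re, Complex.ofReal_im]
          ring
        rw [Finset.sum_congr rfl fun w _ => hterm w, hXkv]
        simp only [hX, Complex.mul_re, Complex.mul_im, Complex.ofReal_re, Complex.ofReal_im]
        ring
      · rw [Complex.im_sum]
        have hterm : ∀ w : Fin n, ((A v w : ℂ) * (ω ^ ((c w).val * k) * (u w : ℂ))).im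
            = A v w * Y k w := by
          intro w
          simp only [hY, Complex.mul_re, Complex.mul_im, Complex.ofReal_re, Complex.ofReal_im]
          ring
        rw [Finset.sum_congr rfl fun w _ => hterm w, hYkv]
        simp only [hY, Complex.mul_re, Complex.mul_im, Complex.ofReal_re, Complex.ofReal_im]
        ring
    set T := ∑ k ∈ Finset.range m,
        (starRingEnd ℂ) (ω ^ (j.val * k)) *
          (∑ w, (A v w : ℂ) * (ω ^ ((c w).val * k) * (u w : ℂ))) with hT
    have hway1 : T = (m:ℂ) *
        ((∑ w' ∈ Finset.univ.filter (fun w' => G.Adj v w' ∧ c w' = j), u w' : ℝ) : ℂ) := by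
      rw [hT]
      have h1 : ∀ k ∈ Finset.range m, (starRingEnd ℂ) (ω ^ (j.val * k)) *
          (∑ w, (A v w : ℂ) * (ω ^ ((c w).val * k) * (u w : ℂ)))
          = ∑ w, (A v w : ℂ) * (u w : ℂ) *
              ((starRingEnd ℂ) (ω ^ (j.val * k)) * ω ^ ((c w).val * k)) := by
        intro k _
        rw [Finset.mul_sum]
        exact Finset.sum_congr rfl fun w _ => by ring
      rw [Finset.sum_congr rfl h1, Finset.sum_comm]
      have h2 : ∀ w : Fin n, ∑ k ∈ Finset.range m, (A v w : ℂ) * (u w : ℂ) *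
          ((starRingEnd ℂ) (ω ^ (j.val * k)) * ω ^ ((c w).val * k))
          = (A v w : ℂ) * (u w : ℂ) * (if j = c w then (m:ℂ) else 0) := by
        intro w
        rw [← Finset.mul_sum, Aux.delta_sum hm0 j (c w)]
      rw [Finset.sum_congr rfl fun w _ => h2 w]
      have h3 : ∀ w : Fin n, (A v w : ℂ) * (u w : ℂ) * (if j = c w then (m:ℂ) else 0)
          = (m:ℂ) * (if G.Adj v w ∧ c w = j then ((u w : ℝ) : ℂ) else 0) := by
        intro w
        by_cases hadj : G.Adj v w
        · by_cases hcw : c w = j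
          · have hA1 : A v w = 1 := by simp [hAdef, hadj]
            rw [if_pos hcw.symm, if_pos ⟨hadj, hcw⟩, hA1]
            push_cast
            ring
          · rw [if_neg (fun h : j = c w => hcw h.symm),
              if_neg (fun h : G.Adj v w ∧ c w = j => hcw h.2)]
            ring
        · have hA0 : A v w = 0 := by simp [hAdef, hadj]
          rw [hA0, if_neg (fun h : G.Adj v w ∧ c w = j => hadj h.1)]
          push_cast
          ring
      rw [Finset.sum_congr rfl fun w _ => h3 w, ← Finset.mul_sum]
      congr 1
      rw [Finset.sum_filter]
      rw [show ((∑ w, if G.Adj v w ∧ c w = j then u w else 0 : ℝ) : ℂ)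
          = ∑ w, ((if G.Adj v w ∧ c w = j then u w else 0 : ℝ) : ℂ) from by
        push_cast; rfl]
      refine Finset.sum_congr rfl fun w _ => ?_
      by_cases h : G.Adj v w ∧ c w = j <;> simp [h]
    have hway2 : T = (ln : ℂ) * ((if j = c v then (m:ℂ) else 0) * (u v : ℂ))
        + ((l1 - ln : ℝ) : ℂ) * (u v : ℂ) := by
      rw [hT]
      have h1 : ∀ k ∈ Finset.range m, (starRingEnd ℂ) (ω ^ (j.val * k)) *
          (∑ w, (A v w : ℂ) * (ω ^ ((c w).val * k) * (u w : ℂ)))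
          = (ln:ℂ) * ((starRingEnd ℂ) (ω ^ (j.val * k)) * ω ^ ((c v).val * k) * (u v:ℂ))
            + (if k = 0 then ((l1 - ln : ℝ):ℂ) * (u v:ℂ) else 0) := by
        intro k hk
        rw [hzz k hk]
        by_cases hk0 : k = 0
        · subst hk0
          rw [if_pos rfl, if_pos rfl]
          simp only [Nat.mul_zero, pow_zero, _root_.map_one]
          push_cast
          ring
        · rw [if_neg hk0, if_neg hk0, add_zero]
          ring
      rw [Finset.sum_congr rfl h1, Finset.sum_add_distrib,
        Finset.sum_ite_eq' (Finset.range m) 0 (fun _ => ((l1 - ln : ℝ):ℂ) * (u v:ℂ)),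
        if_pos (Finset.mem_range.mpr (Nat.pos_of_ne_zero hm0))]
      congr 1
      rw [← Finset.mul_sum]
      congr 1
      rw [← Finset.sum_mul, Aux.delta_sum hm0 j (c v)]
    have hfinal : (m:ℂ) *
        ((∑ w' ∈ Finset.univ.filter (fun w' => G.Adj v w' ∧ c w' = j), u w' : ℝ) : ℂ)
        = (ln : ℂ) * ((if j = c v then (m:ℂ) else 0) * (u v : ℂ))
          + ((l1 - ln : ℝ) : ℂ) * (u v : ℂ) := by
      rw [← hway1, hway2]
    by_cases hcv : c v = j
    · rw [if_pos hcv.symm] at hfinal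
      rw [if_pos hcv]
      have h9 : (((m:ℝ) * (∑ w' ∈ Finset.univ.filter (fun w' => G.Adj v w' ∧ c w' = j), u w') : ℝ) : ℂ)
          = ((u v * ((l1 - ln) + (m:ℝ) * ln) : ℝ) : ℂ) := by
        push_cast
        push_cast at hfinal
        linear_combination hfinal
      exact_mod_cast h9
    · rw [if_neg (fun h : j = c v => hcv h.symm)] at hfinal
      rw [if_neg hcv]
      have h9 : (((m:ℝ) * (∑ w' ∈ Finset.univ.filter (fun w' => G.Adj v w' ∧ c w' = j), u w') : ℝ) : ℂ)
          = ((u v * ((l1 - ln) + 0) : ℝ) : ℂ) := by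
        push_cast
        push_cast at hfinal
        linear_combination hfinal
      exact_mod_cast h9
  intro i j v w hv hw
  have h1 := key j v
  have h2 := key j w
  rw [hv] at h1
  rw [hw] at h2
  have huv : u v ≠ 0 := ne_of_gt (hupos v)
  have huw : u w ≠ 0 := ne_of_gt (hupos w)
  have e1 : (1 / u v) * ∑ w' ∈ Finset.univ.filter (fun w' => G.Adj v w' ∧ c w' = j), u w'
      = ((l1 - ln) + (if i = j then (m:ℝ) * ln else 0)) / m := by
    rw [one_div, inv_mul_eq_div, div_eq_div_iff huv hmR]
    linarith [h1]
  have e2 : (1 / u w) * ∑ w' ∈ Finset.univ.filter (fun w' => G.Adj w w' ∧ c w' = j), u w'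
      = ((l1 - ln) + (if i = j then (m:ℝ) * ln else 0)) / m := by
    rw [one_div, inv_mul_eq_div, div_eq_div_iff huw hmR]
    linarith [h2]
  rw [e1, e2]
end

section
/- Let G be a finite simple graph on n vertices, let d ≥ 0 be an integer, and let A be a real symmetric n × n matrix indexed by V(G) such that |A_{u,v}| ≤ 1 for all u, v and A_{u,v} = 0 whenever u and v are not adjacent in G. Then α^d(G) ≤ min{ n − n_d^+(A), n − n_d^-(A) }, where n_d^+(A) is the number of eigenvalues of A strictly greater than d and n_d^-(A) is the number of eigenvalues of A strictly less than −d (counted with multiplicity). -/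
open SimpleGraph Finset Matrix

section AuxSpectral

open Module Submodule RealInnerProductSpace

variable {V : Type*} [Fintype V] [DecidableEq V]

private lemma aux_span_finrank (b : OrthonormalBasis V ℝ (EuclideanSpace ℝ V)) (T : Set V) :
    Module.finrank ℝ (Submodule.span ℝ (⇑b '' T)) = T.ncard := by
  classical
  have li : LinearIndependent ℝ (fun x : (⇑b '' T) => (x : EuclideanSpace ℝ V)) :=
    LinearIndepOn.image_of_comp (⇑b) id (b.orthonormal.linearIndependent.linearIndepOn T)
  rw [finrank_span_set_eq_card li, Set.ncard_eq_toFinset_card', Set.toFinset_image,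
    Finset.card_image_of_injective _ (b.orthonormal.linearIndependent.injective)]

private lemma aux_repr_eq_zero (b : OrthonormalBasis V ℝ (EuclideanSpace ℝ V)) (T : Set V)
    {x : EuclideanSpace ℝ V} (hx : x ∈ Submodule.span ℝ (⇑b '' T)) {i : V} (hi : i ∉ T) :
    b.repr x i = 0 := by
  classical
  set φ : EuclideanSpace ℝ V →ₗ[ℝ] ℝ :=
    (EuclideanSpace.projₗ i).comp (b.repr.toLinearEquiv :
      EuclideanSpace ℝ V ≃ₗ[ℝ] EuclideanSpace ℝ V).toLinearMap with hφ
  have hker : Submodule.span ℝ (⇑b '' T) ≤ LinearMap.ker φ := by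
    rw [Submodule.span_le]
    rintro y ⟨j, hj, rfl⟩
    have hij : ¬ (i = j) := fun h => hi (h ▸ hj)
    have heq : φ (b j) = b.repr (b j) i := rfl
    rw [SetLike.mem_coe, LinearMap.mem_ker, heq, b.repr_self j,
      EuclideanSpace.single_apply, if_neg hij]
  have hh := hker hx
  rw [LinearMap.mem_ker] at hh
  exact hh

private lemma aux_quad_bound {G : SimpleGraph V} {d : ℕ} {A : Matrix V V ℝ}
    (hbd : ∀ u v : V, |A u v| ≤ 1) (hz : ∀ u v : V, ¬ G.Adj u v → A u v = 0)
    (s : Set V) (hs : ∀ v ∈ s, ({w | w ∈ s ∧ G.Adj v w} : Set V).ncard ≤ d)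
    (x : V → ℝ) (hx : ∀ v ∉ s, x v = 0) :
    |∑ u, ∑ v, x u * A u v * x v| ≤ d * ∑ v, (x v)^2 := by
  classical
  set c : V → V → ℝ := fun u v => if u ∈ s ∧ v ∈ s ∧ G.Adj u v then 1 else 0 with hc
  have hcsymm : ∀ u v, c u v = c v u := by
    intro u v
    simp only [hc]
    congr 1
    simp only [eq_iff_iff]
    constructor
    · rintro ⟨h1, h2, h3⟩; exact ⟨h2, h1, h3.symm⟩
    · rintro ⟨h1, h2, h3⟩; exact ⟨h2, h1, h3.symm⟩
  have habs : ∀ u v, |x u * A u v * x v| ≤ c u v * ((x u)^2 + (x v)^2) / 2 := by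
    intro u v
    by_cases h : u ∈ s ∧ v ∈ s ∧ G.Adj u v
    · have h1 : |x u * A u v * x v| ≤ |x u| * |x v| := by
        rw [abs_mul, abs_mul]
        calc |x u| * |A u v| * |x v| ≤ |x u| * 1 * |x v| := by
              apply mul_le_mul_of_nonneg_right _ (abs_nonneg _)
              exact mul_le_mul_of_nonneg_left (hbd u v) (abs_nonneg _)
          _ = |x u| * |x v| := by ring
      have h2 : |x u| * |x v| ≤ ((x u)^2 + (x v)^2) / 2 := by
        nlinarith [sq_nonneg (|x u| - |x v|), sq_abs (x u), sq_abs (x v), abs_nonneg (x u), abs_nonneg (x v)]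
      simp only [hc, if_pos h, one_mul]
      linarith
    · have hzero : x u * A u v * x v = 0 := by
        by_cases hu : u ∈ s
        · by_cases hv : v ∈ s
          · have : ¬ G.Adj u v := fun hadj => h ⟨hu, hv, hadj⟩
            rw [hz u v this]; ring
          · rw [hx v hv]; ring
        · rw [hx u hu]; ring
      simp [hzero, hc, if_neg h]
  have hrow : ∀ u, (∑ v, c u v) * (x u)^2 ≤ d * (x u)^2 := by
    intro u
    by_cases hu : u ∈ s
    · apply mul_le_mul_of_nonneg_right _ (sq_nonneg _)
      have : (∑ v, c u v) = (Finset.univ.filter (fun v => v ∈ s ∧ G.Adj u v)).card := by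
        have hfe : Finset.univ.filter (fun v => u ∈ s ∧ v ∈ s ∧ G.Adj u v)
            = Finset.univ.filter (fun v => v ∈ s ∧ G.Adj u v) := by
          apply Finset.filter_congr
          intro v _
          simp [hu]
        simp only [hc, Finset.sum_boole]
        rw [hfe]
      rw [this]
      have := hs u hu
      rw [Set.ncard_eq_toFinset_card', Set.toFinset_setOf] at this
      exact_mod_cast this
    · rw [hx u hu]; simp
  calc |∑ u, ∑ v, x u * A u v * x v|
      ≤ ∑ u, |∑ v, x u * A u v * x v| := Finset.abs_sum_le_sum_abs _ _
    _ ≤ ∑ u, ∑ v, |x u * A u v * x v| :=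
        Finset.sum_le_sum fun u _ => Finset.abs_sum_le_sum_abs _ _
    _ ≤ ∑ u, ∑ v, c u v * ((x u)^2 + (x v)^2) / 2 :=
        Finset.sum_le_sum fun u _ => Finset.sum_le_sum fun v _ => habs u v
    _ = ∑ u, ∑ v, (c u v * (x u)^2/2 + c u v * (x v)^2/2) := by
        apply Finset.sum_congr rfl; intro u _
        apply Finset.sum_congr rfl; intro v _
        ring
    _ = (∑ u, ∑ v, c u v * (x u)^2/2) + (∑ u, ∑ v, c u v * (x v)^2/2) := by
        rw [← Finset.sum_add_distrib]
        apply Finset.sum_congr rfl; intro u _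
        rw [Finset.sum_add_distrib]
    _ = ∑ u, (∑ v, c u v) * (x u)^2 := by
        have e2 : (∑ u, ∑ v, c u v * (x v)^2/2) = ∑ u, ∑ v, c u v * (x u)^2/2 := by
          rw [Finset.sum_comm]
          exact Finset.sum_congr rfl fun u _ => Finset.sum_congr rfl fun v _ => by rw [hcsymm]
        rw [e2, ← Finset.sum_add_distrib]
        apply Finset.sum_congr rfl; intro u _
        rw [← Finset.sum_add_distrib, Finset.sum_mul]
        apply Finset.sum_congr rfl; intro v _
        ring
    _ ≤ ∑ u, d * (x u)^2 := Finset.sum_le_sum fun u _ => hrow u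
    _ = d * ∑ v, (x v)^2 := by rw [Finset.mul_sum]

private lemma aux_key {G : SimpleGraph V} {d : ℕ} {A : Matrix V V ℝ} (hA : A.IsHermitian)
    (hbd : ∀ u v : V, |A u v| ≤ 1) (hz : ∀ u v : V, ¬ G.Adj u v → A u v = 0)
    (s : Set V) (hs : ∀ v ∈ s, ({w | w ∈ s ∧ G.Adj v w} : Set V).ncard ≤ d)
    (T : Set V) (ε : ℝ) (hε : |ε| ≤ 1)
    (hT : ∀ i ∈ T, (d : ℝ) < ε * hA.eigenvalues i) :
    s.ncard + T.ncard ≤ Fintype.card V := by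
  classical
  by_contra hcon
  push_neg at hcon
  set b := hA.eigenvectorBasis with hb
  set e := EuclideanSpace.basisFun V ℝ with he
  set W1 := Submodule.span ℝ (⇑b '' T) with hW1
  set W2 := Submodule.span ℝ (⇑e '' s) with hW2
  have h1 : Module.finrank ℝ W1 = T.ncard := aux_span_finrank b T
  have h2 : Module.finrank ℝ W2 = s.ncard := aux_span_finrank e s
  have hsum := Submodule.finrank_sup_add_finrank_inf_eq W1 W2
  have hle : Module.finrank ℝ ↥(W1 ⊔ W2) ≤ Fintype.card V := by
    have := Submodule.finrank_le (W1 ⊔ W2)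
    rwa [finrank_euclideanSpace] at this
  have hpos : 0 < Module.finrank ℝ ↥(W1 ⊓ W2) := by omega
  have hne : W1 ⊓ W2 ≠ ⊥ := by
    intro hbot
    rw [hbot, finrank_bot] at hpos
    exact lt_irrefl 0 hpos
  obtain ⟨x, hxmem, hx0⟩ := Submodule.exists_mem_ne_zero_of_ne_bot hne
  have hxW1 : x ∈ W1 := hxmem.1
  have hxW2 : x ∈ W2 := hxmem.2
  -- support of x
  have hsupp : ∀ v ∉ s, x v = 0 := by
    intro v hv
    have := aux_repr_eq_zero e s hxW2 hv
    rwa [EuclideanSpace.basisFun_repr] at this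
  -- eigencoordinates
  set cc : V → ℝ := fun i => b.repr x i with hcc
  have hcT : ∀ i ∉ T, cc i = 0 := fun i hi => aux_repr_eq_zero b T hxW1 hi
  have hsym := (Matrix.isHermitian_iff_isSymmetric.mp hA)
  have hAx : ∀ i, b.repr ((Matrix.toEuclideanLin A) x) i = hA.eigenvalues i * cc i := by
    intro i
    simp only [hcc]
    rw [b.repr_apply_apply, b.repr_apply_apply, ← hsym (b i) x]
    have hmv : (Matrix.toEuclideanLin A) (b i) = hA.eigenvalues i • b i := by
      apply_fun (WithLp.equiv 2 (V → ℝ))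
      simp only [Matrix.toEuclideanLin_apply]
      exact hA.mulVec_eigenvectorBasis i
    rw [hmv, real_inner_smul_left]
  -- quadratic form identity
  have hinner : (inner ℝ x ((Matrix.toEuclideanLin A) x) : ℝ) = ∑ i, hA.eigenvalues i * (cc i)^2 := by
    rw [← b.repr.inner_map_map x ((Matrix.toEuclideanLin A) x)]
    rw [PiLp.inner_apply]
    apply Finset.sum_congr rfl
    intro i _
    rw [hAx i]
    simp [hcc]
    ring
  have hQform : (inner ℝ x ((Matrix.toEuclideanLin A) x) : ℝ) = ∑ u, ∑ v, x u * A u v * x v := by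
    rw [PiLp.inner_apply]
    simp only [RCLike.inner_apply, starRingEnd_apply]
    apply Finset.sum_congr rfl
    intro u _
    have : (Matrix.toEuclideanLin A) x u = ∑ v, A u v * x v := by
      rw [Matrix.toEuclideanLin_apply]
      rfl
    rw [this, Finset.sum_mul]
    apply Finset.sum_congr rfl
    intro v _
    simp
    ring
  -- norms
  have hnorm : ∑ v, (x v)^2 = ∑ i, (cc i)^2 := by
    have := b.repr.inner_map_map x x
    rw [PiLp.inner_apply, PiLp.inner_apply] at this
    simpa [hcc, sq] using this.symm
  -- strict lower bound
  obtain ⟨i0, hi0⟩ : ∃ i, cc i ≠ 0 := by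
    by_contra hall
    push_neg at hall
    apply hx0
    apply b.repr.injective
    ext i
    simpa [hcc] using hall i
  have hi0T : i0 ∈ T := by
    by_contra h
    exact hi0 (hcT i0 h)
  have hstrict : (d : ℝ) * ∑ i, (cc i)^2 < ∑ i, ε * hA.eigenvalues i * (cc i)^2 := by
    rw [Finset.mul_sum]
    apply Finset.sum_lt_sum
    · intro i _
      by_cases hiT : i ∈ T
      · exact mul_le_mul_of_nonneg_right (le_of_lt (hT i hiT)) (sq_nonneg _)
      · rw [hcT i hiT]; ring_nf; exact le_refl _
    · exact ⟨i0, Finset.mem_univ i0,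
        mul_lt_mul_of_pos_right (hT i0 hi0T) (by positivity)⟩
  have hQbd := aux_quad_bound hbd hz s hs x hsupp
  have hεQ : ε * (inner ℝ x ((Matrix.toEuclideanLin A) x) : ℝ) = ∑ i, ε * hA.eigenvalues i * (cc i)^2 := by
    rw [hinner, Finset.mul_sum]
    apply Finset.sum_congr rfl
    intro i _
    ring
  have hfinal : ε * (inner ℝ x ((Matrix.toEuclideanLin A) x) : ℝ) ≤ d * ∑ i, (cc i)^2 := by
    calc ε * (inner ℝ x ((Matrix.toEuclideanLin A) x) : ℝ)
        ≤ |ε * (inner ℝ x ((Matrix.toEuclideanLin A) x) : ℝ)| := le_abs_self _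
      _ = |ε| * |(inner ℝ x ((Matrix.toEuclideanLin A) x) : ℝ)| := abs_mul _ _
      _ ≤ 1 * |(inner ℝ x ((Matrix.toEuclideanLin A) x) : ℝ)| :=
          mul_le_mul_of_nonneg_right hε (abs_nonneg _)
      _ = |∑ u, ∑ v, x u * A u v * x v| := by rw [one_mul, hQform]
      _ ≤ d * ∑ v, (x v)^2 := hQbd
      _ = d * ∑ i, (cc i)^2 := by rw [hnorm]
  rw [hεQ] at hfinal
  exact absurd (lt_of_lt_of_le hstrict hfinal) (lt_irrefl _)

end AuxSpectral

open ImproperPaper in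

theorem stmt_11 {V : Type*} [Fintype V] [DecidableEq V] (G : SimpleGraph V) (d : ℕ)
    (A : Matrix V V ℝ) (hA : A.IsHermitian)
    (hbd : ∀ u v : V, |A u v| ≤ 1) (hz : ∀ u v : V, ¬ G.Adj u v → A u v = 0) :
    maxImproperIndep G d ≤
      min (Fintype.card V - ({i : V | (d : ℝ) < hA.eigenvalues i} : Set V).ncard)
        (Fintype.card V - ({i : V | hA.eigenvalues i < -(d : ℝ)} : Set V).ncard) := by
  classical
  rw [ImproperPaper.maxImproperIndep]
  refine csSup_le ⟨0, ?_⟩ ?_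
  · exact ⟨∅, Set.ncard_empty _, fun v hv => absurd hv (Set.notMem_empty v)⟩
  rintro k ⟨s, rfl, hs⟩
  have key : ∀ (T : Set V) (ε : ℝ), |ε| ≤ 1 → (∀ i ∈ T, (d : ℝ) < ε * hA.eigenvalues i) →
      s.ncard ≤ Fintype.card V - T.ncard := by
    intro T ε hε hT
    have := aux_key hA hbd hz s hs T ε hε hT
    omega
  apply le_min
  · apply key _ 1 (by norm_num)
    intro i hi
    simpa using hi
  · apply key _ (-1) (by norm_num)
    intro i hi
    have : hA.eigenvalues i < -(d : ℝ) := hi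
    linarith
end
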